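/- Let μ = 3/2 + (√7/2)·i ∈ ℂ and λ = 4 ∈ ℂ, and call a pair of integers (a,b) a normalized slope if either (a,b) = (1,0), or b ≥ 1 and gcd(a,b) = 1. Then the set of normalized slopes (a,b) satisfying |a·μ + b·λ| ≤ 12 is exactly the following 26-element set: {(1,0)} ∪ {(a,1) : a ∈ {−7,−6,−5,−4,−3,−2,−1,0,1,2,3,4}} ∪ {(−7,2),(−5,2),(−3,2),(−1,2),(1,2)} ∪ {(−8,3),(−7,3),(−5,3),(−4,3),(−2,3),(−1,3)} ∪ {(−7,4),(−5,4)}. -/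

import Mathlib

open Complex

theorem chain_link_short_slopes :
    let μ : ℂ := 3 / 2 + (Real.sqrt 7 / 2) * Complex.I
    let lam : ℂ := 4
    {p : ℤ × ℤ |
        (p = (1, 0) ∨ (1 ≤ p.2 ∧ Int.gcd p.1 p.2 = 1)) ∧
        ‖(p.1 : ℂ) * μ + (p.2 : ℂ) * lam‖ ≤ 12} =
      ({(1, 0),
        (-7, 1), (-6, 1), (-5, 1), (-4, 1), (-3, 1), (-2, 1), (-1, 1),
        (0, 1), (1, 1), (2, 1), (3, 1), (4, 1),
        (-7, 2), (-5, 2), (-3, 2), (-1, 2), (1, 2),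
        (-8, 3), (-7, 3), (-5, 3), (-4, 3), (-2, 3), (-1, 3),
        (-7, 4), (-5, 4)} : Set (ℤ × ℤ)) := by
  intro μ lam
  have h7 : Real.sqrt 7 ^ 2 = 7 := Real.sq_sqrt (by norm_num)
  have key : ∀ a b : ℤ, ‖(a:ℂ) * μ + (b:ℂ) * lam‖ ≤ 12 ↔
      a^2 + 3*a*b + 4*b^2 ≤ 36 := by
    intro a b
    set z : ℂ := (a:ℂ) * μ + (b:ℂ) * lam with hz
    have hns : Complex.normSq z = ((a^2 + 3*a*b + 4*b^2 : ℤ) : ℝ) * 4 := by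
      simp [hz, μ, lam, Complex.normSq_apply]
      nlinarith [h7]
    constructor
    · intro h
      have h2 : Complex.normSq z ≤ 144 := by
        nlinarith [Complex.sq_norm z, norm_nonneg z]
      rw [hns] at h2
      have h3 : ((a^2 + 3*a*b + 4*b^2 : ℤ) : ℝ) ≤ 36 := by linarith
      exact_mod_cast h3
    · intro h
      have h2 : Complex.normSq z ≤ 144 := by
        rw [hns]
        have h3 : ((a^2 + 3*a*b + 4*b^2 : ℤ) : ℝ) ≤ 36 := by exact_mod_cast h
        linarith
      calc ‖z‖ = Real.sqrt (Complex.normSq z) := by rw [Complex.norm_def]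
        _ ≤ Real.sqrt 144 := Real.sqrt_le_sqrt h2
        _ = 12 := by rw [show (144:ℝ) = 12^2 by norm_num, Real.sqrt_sq (by norm_num)]
  ext ⟨a, b⟩
  simp only [Set.mem_setOf_eq, key, Set.mem_insert_iff, Set.mem_singleton_iff,
    Prod.mk.injEq]
  constructor
  · rintro ⟨hn, hq⟩
    have hb1 : -4 ≤ b := by nlinarith [sq_nonneg (2*a+3*b)]
    have hb2 : b ≤ 4 := by nlinarith [sq_nonneg (2*a+3*b)]
    have ha1 : -9 ≤ a := by nlinarith [sq_nonneg (3*a+8*b)]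
    have ha2 : a ≤ 9 := by nlinarith [sq_nonneg (3*a+8*b)]
    interval_cases b <;> interval_cases a <;> revert hn hq <;> decide
  · rintro (⟨rfl, rfl⟩|⟨rfl, rfl⟩|⟨rfl, rfl⟩|⟨rfl, rfl⟩|⟨rfl, rfl⟩|⟨rfl, rfl⟩|
      ⟨rfl, rfl⟩|⟨rfl, rfl⟩|⟨rfl, rfl⟩|⟨rfl, rfl⟩|⟨rfl, rfl⟩|⟨rfl, rfl⟩|⟨rfl, rfl⟩|
      ⟨rfl, rfl⟩|⟨rfl, rfl⟩|⟨rfl, rfl⟩|⟨rfl, rfl⟩|⟨rfl, rfl⟩|⟨rfl, rfl⟩|⟨rfl, rfl⟩|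
      ⟨rfl, rfl⟩|⟨rfl, rfl⟩|⟨rfl, rfl⟩|⟨rfl, rfl⟩|⟨rfl, rfl⟩|⟨rfl, rfl⟩) <;>
    exact ⟨by decide, by decide⟩
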